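/- arXiv:2303.13145 — 2 statements merged into one kernel-verified Lean document; each statement's English description precedes it below -/
import Mathlib

section
/- Let H be a k-uniform hypergraph with m edges and no isolated vertices. For any nonempty proper subset X of V(H), the largest normalized Laplacian eigenvalue satisfies λ_1(H) ≥ |∂X|·k·m / ((k-1)·vol(X)·(km - vol(X))). -/
open Finset

variable {n : ℕ}

def hdeg (E : Finset (Finset (Fin n))) (v : Fin n) : ℕ :=
  (E.filter fun e => v ∈ e).card

def codeg (E : Finset (Finset (Fin n))) (u v : Fin n) : ℕ :=
  (E.filter fun e => u ∈ e ∧ v ∈ e).card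

noncomputable def adjMat (E : Finset (Finset (Fin n))) : Matrix (Fin n) (Fin n) ℝ :=
  fun u v => if u = v then 0
    else ∑ e ∈ E.filter (fun e => u ∈ e ∧ v ∈ e), (1 : ℝ) / ((e.card : ℝ) - 1)

noncomputable def lapMat (E : Finset (Finset (Fin n))) : Matrix (Fin n) (Fin n) ℝ :=
  Matrix.diagonal (fun v => (hdeg E v : ℝ)) - adjMat E

noncomputable def normLap (E : Finset (Finset (Fin n))) : Matrix (Fin n) (Fin n) ℝ :=
  Matrix.diagonal (fun v => (hdeg E v : ℝ) ^ (-(1/2) : ℝ)) * lapMat E *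
    Matrix.diagonal (fun v => (hdeg E v : ℝ) ^ (-(1/2) : ℝ))

noncomputable def eigsAsc (M : Matrix (Fin n) (Fin n) ℝ) : Fin n → ℝ :=
  if h : M.IsHermitian then (h.eigenvalues ∘ Tuple.sort h.eigenvalues) else 0

noncomputable def lamMax {n : ℕ} (M : Matrix (Fin n) (Fin n) ℝ) : ℝ :=
  ⨆ i, eigsAsc M i

noncomputable def volR {n : ℕ} (E : Finset (Finset (Fin n))) (S : Finset (Fin n)) : ℝ :=
  ∑ v ∈ S, (hdeg E v : ℝ)

noncomputable def bndR {n : ℕ} (E : Finset (Finset (Fin n))) (S : Finset (Fin n)) : ℝ :=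
  ∑ u ∈ S, ∑ v ∈ Sᶜ, (codeg E u v : ℝ)

open Matrix in
lemma rayleigh_aux {n : ℕ} (M : Matrix (Fin n) (Fin n) ℝ)
    (hM : M.IsHermitian) (x : Fin n → ℝ) :
    x ⬝ᵥ M.mulVec x ≤ (⨆ j, hM.eigenvalues j) * (x ⬝ᵥ x) := by
  rcases Nat.eq_zero_or_pos n with h0 | hn
  · subst h0; simp [dotProduct]
  set U : Matrix (Fin n) (Fin n) ℝ := (hM.eigenvectorUnitary : Matrix (Fin n) (Fin n) ℝ) with hU
  set w := Matrix.vecMul x U with hw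
  have hstar : (star U : Matrix (Fin n) (Fin n) ℝ).mulVec x = w := by
    have : (star U : Matrix (Fin n) (Fin n) ℝ) = Uᵀ := by
      ext i j; simp [Matrix.star_apply]
    rw [this, Matrix.mulVec_transpose]
  have key1 : x ⬝ᵥ M.mulVec x = ∑ j, hM.eigenvalues j * (w j) ^ 2 := by
    conv_lhs => rw [hM.spectral_theorem, Unitary.conjStarAlgAut_apply]
    rw [← Matrix.mulVec_mulVec, ← Matrix.mulVec_mulVec, dotProduct_mulVec, hstar]
    simp only [dotProduct, Matrix.mulVec_diagonal]
    exact Finset.sum_congr rfl fun j _ => by rw [← hw]; simp; ring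
  have key2 : x ⬝ᵥ x = ∑ j, (w j) ^ 2 := by
    have h1 : U * star U = 1 := mem_unitaryGroup_iff.mp hM.eigenvectorUnitary.2
    calc x ⬝ᵥ x = x ⬝ᵥ (U * star U).mulVec x := by rw [h1, Matrix.one_mulVec]
    _ = ∑ j, (w j) ^ 2 := by
        rw [← Matrix.mulVec_mulVec, dotProduct_mulVec, hstar]
        simp [dotProduct, ← hw, sq]
  have hbdd : BddAbove (Set.range hM.eigenvalues) := Set.finite_range _ |>.bddAbove
  rw [key1, key2, Finset.mul_sum]
  exact Finset.sum_le_sum fun j _ =>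
    mul_le_mul_of_nonneg_right (le_ciSup hbdd j) (sq_nonneg _)

lemma isHermitian_normLap (E : Finset (Finset (Fin n))) : (normLap E).IsHermitian := by
  have hA : (adjMat E).IsHermitian := by
    ext i j
    simp only [Matrix.conjTranspose_apply, adjMat, star_trivial]
    by_cases h : j = i
    · subst h; simp
    · rw [if_neg h, if_neg (Ne.symm h)]
      apply Finset.sum_congr _ fun _ _ => rfl
      congr 1; ext e; exact and_comm
  have hL : (lapMat E).IsHermitian := (Matrix.isHermitian_diagonal _).sub hA
  have hD : (Matrix.diagonal fun v => (hdeg E v : ℝ) ^ (-(1/2) : ℝ)).IsHermitian :=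
    Matrix.isHermitian_diagonal _
  have := Matrix.isHermitian_mul_mul_conjTranspose
    (Matrix.diagonal fun v => (hdeg E v : ℝ) ^ (-(1/2) : ℝ)) hL
  rwa [hD.eq] at this

lemma lamMax_eq (M : Matrix (Fin n) (Fin n) ℝ) (hM : M.IsHermitian) :
    lamMax M = ⨆ j, hM.eigenvalues j := by
  rw [lamMax]
  have h1 : eigsAsc M = hM.eigenvalues ∘ Tuple.sort hM.eigenvalues := dif_pos hM
  rw [h1]
  unfold iSup
  congr 1
  exact Function.Surjective.range_comp (Tuple.sort hM.eigenvalues).surjective _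

lemma adj_rowsum {k : ℕ} (hk : 2 ≤ k) (E : Finset (Finset (Fin n)))
    (hunif : ∀ e ∈ E, e.card = k) (u : Fin n) :
    ∑ v, adjMat E u v = (hdeg E u : ℝ) := by
  have hrw : ∀ v, adjMat E u v
      = ∑ e ∈ E, if u ∈ e ∧ v ∈ e ∧ v ≠ u then ((e.card : ℝ) - 1)⁻¹ else 0 := by
    intro v
    by_cases h : u = v
    · subst h; simp [adjMat]
    · rw [adjMat]
      simp only [if_neg h]
      rw [Finset.sum_filter]
      refine Finset.sum_congr rfl fun e _ => ?_
      by_cases h2 : u ∈ e ∧ v ∈ e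
      · rw [if_pos h2, if_pos ⟨h2.1, h2.2, Ne.symm h⟩, one_div]
      · rw [if_neg h2, if_neg (by tauto)]
  simp_rw [hrw]
  rw [Finset.sum_comm]
  have key : ∀ e ∈ E,
      (∑ v : Fin n, if u ∈ e ∧ v ∈ e ∧ v ≠ u then ((e.card : ℝ) - 1)⁻¹ else 0)
        = if u ∈ e then 1 else 0 := by
    intro e he
    by_cases hu : u ∈ e
    · rw [if_pos hu, ← Finset.sum_filter]
      have hfil : Finset.univ.filter (fun v => u ∈ e ∧ v ∈ e ∧ v ≠ u) = e.erase u := by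
        ext v; simp [Finset.mem_erase, hu, and_comm]
      rw [hfil, Finset.sum_const, Finset.card_erase_of_mem hu, hunif e he]
      have h1 : ((k : ℝ) - 1) ≠ 0 := by
        have : (2 : ℝ) ≤ (k : ℝ) := by exact_mod_cast hk
        linarith
      rw [nsmul_eq_mul]
      rw [Nat.cast_sub (by omega), Nat.cast_one]
      field_simp
    · rw [if_neg hu]
      exact Finset.sum_eq_zero fun v _ => if_neg (by tauto)
  rw [Finset.sum_congr rfl key, Finset.sum_boole, hdeg]

lemma handshake {k m : ℕ} (E : Finset (Finset (Fin n)))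
    (hunif : ∀ e ∈ E, e.card = k) (hm : E.card = m) :
    ∑ v, (hdeg E v : ℝ) = (k : ℝ) * (m : ℝ) := by
  have : ∑ v, hdeg E v = k * m := by
    have h1 : ∀ v : Fin n, hdeg E v = ∑ e ∈ E, if v ∈ e then 1 else 0 := by
      intro v; rw [hdeg, Finset.card_filter]
    simp_rw [h1]
    rw [Finset.sum_comm]
    have h2 : ∀ e ∈ E, (∑ v : Fin n, if v ∈ e then 1 else 0) = k := by
      intro e he
      rw [← Finset.card_filter]
      rw [← hunif e he]
      congr 1
      ext v; simp
    rw [Finset.sum_congr rfl h2, Finset.sum_const, hm, smul_eq_mul, mul_comm]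
  exact_mod_cast congrArg (Nat.cast : ℕ → ℝ) this

lemma adj_cross {k : ℕ} (E : Finset (Finset (Fin n)))
    (hunif : ∀ e ∈ E, e.card = k) {u v : Fin n} (huv : u ≠ v) :
    adjMat E u v = (codeg E u v : ℝ) / ((k : ℝ) - 1) := by
  rw [adjMat, if_neg huv, codeg]
  rw [Finset.card_filter]
  push_cast
  rw [Finset.sum_div]
  rw [Finset.sum_filter]
  refine Finset.sum_congr rfl fun e he => ?_
  by_cases h2 : u ∈ e ∧ v ∈ e
  · rw [if_pos h2, if_pos h2, hunif e he]
  · rw [if_neg h2, if_neg h2, zero_div]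

lemma adj_symm (E : Finset (Finset (Fin n))) (u v : Fin n) : adjMat E v u = adjMat E u v := by
  rcases eq_or_ne u v with h | h
  · subst h; rfl
  · rw [adjMat, adjMat, if_neg h, if_neg h.symm]
    refine Finset.sum_congr ?_ fun _ _ => rfl
    congr 1; ext e; exact and_comm

open Matrix in
lemma dot_lap (E : Finset (Finset (Fin n)))
    (hrow : ∀ u, ∑ v, adjMat E u v = (hdeg E u : ℝ))
    (X : Finset (Fin n)) (α β : ℝ) :
    (fun v => if v ∈ X then α else β) ⬝ᵥ
        (lapMat E).mulVec (fun v => if v ∈ X then α else β)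
      = (∑ u ∈ X, ∑ v ∈ Xᶜ, adjMat E u v) * (α - β) ^ 2 := by
  set y : Fin n → ℝ := fun v => if v ∈ X then α else β with hy
  set A := adjMat E with hA
  set d : Fin n → ℝ := fun v => (hdeg E v : ℝ) with hd
  set B := ∑ u ∈ X, ∑ v ∈ Xᶜ, A u v with hB
  have hyin : ∀ v ∈ X, y v = α := fun v hv => if_pos hv
  have hyout : ∀ v ∈ Xᶜ, y v = β := fun v hv => if_neg (Finset.mem_compl.mp hv)
  have hSsym : ∑ u ∈ Xᶜ, ∑ v ∈ X, A u v = B := by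
    rw [hB]
    refine Finset.sum_comm.trans ?_
    exact Finset.sum_congr rfl fun a _ => Finset.sum_congr rfl fun b _ => adj_symm E a b
  have hSXX : ∑ u ∈ X, ∑ v ∈ X, A u v = (∑ u ∈ X, d u) - B := by
    have h0 : ∀ u, ∑ v ∈ X, A u v + ∑ v ∈ Xᶜ, A u v = d u := by
      intro u; rw [Finset.sum_add_sum_compl]; exact hrow u
    have h2 : ∑ u ∈ X, (∑ v ∈ X, A u v + ∑ v ∈ Xᶜ, A u v) = ∑ u ∈ X, d u :=
      Finset.sum_congr rfl fun u _ => h0 u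
    rw [Finset.sum_add_distrib] at h2
    linarith [h2]
  have hSCC : ∑ u ∈ Xᶜ, ∑ v ∈ Xᶜ, A u v = (∑ u ∈ Xᶜ, d u) - B := by
    have h0 : ∀ u, ∑ v ∈ X, A u v + ∑ v ∈ Xᶜ, A u v = d u := by
      intro u; rw [Finset.sum_add_sum_compl]; exact hrow u
    have h2 : ∑ u ∈ Xᶜ, (∑ v ∈ X, A u v + ∑ v ∈ Xᶜ, A u v) = ∑ u ∈ Xᶜ, d u :=
      Finset.sum_congr rfl fun u _ => h0 u
    rw [Finset.sum_add_distrib, hSsym] at h2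
    linarith [h2]
  have hdot : y ⬝ᵥ (lapMat E).mulVec y
      = (∑ u, d u * y u ^ 2) - ∑ u, ∑ v, y u * A u v * y v := by
    rw [lapMat, Matrix.sub_mulVec, dotProduct_sub, ← hA, ← hd]
    congr 1
    · simp only [dotProduct, Matrix.mulVec_diagonal]
      exact Finset.sum_congr rfl fun u _ => by ring
    · simp only [dotProduct, Matrix.mulVec]
      exact Finset.sum_congr rfl fun u _ => by
        rw [Finset.mul_sum]
        exact Finset.sum_congr rfl fun v _ => by ring
  have hDpart : ∑ u, d u * y u ^ 2
      = α ^ 2 * ∑ u ∈ X, d u + β ^ 2 * ∑ u ∈ Xᶜ, d u := by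
    rw [← Finset.sum_add_sum_compl X (fun u => d u * y u ^ 2)]
    congr 1
    · rw [Finset.mul_sum]
      exact Finset.sum_congr rfl fun u hu => by rw [hyin u hu]; ring
    · rw [Finset.mul_sum]
      exact Finset.sum_congr rfl fun u hu => by rw [hyout u hu]; ring
  have hApart : ∑ u, ∑ v, y u * A u v * y v
      = α ^ 2 * ((∑ u ∈ X, d u) - B) + 2 * α * β * B + β ^ 2 * ((∑ u ∈ Xᶜ, d u) - B) := by
    have hinner : ∀ (c : ℝ) (u : Fin n), ∑ v, c * A u v * y v
        = c * α * ∑ v ∈ X, A u v + c * β * ∑ v ∈ Xᶜ, A u v := by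
      intro c u
      rw [← Finset.sum_add_sum_compl X (fun v => c * A u v * y v), Finset.mul_sum,
        Finset.mul_sum]
      congr 1
      · exact Finset.sum_congr rfl fun v hv => by rw [hyin v hv]; ring
      · exact Finset.sum_congr rfl fun v hv => by rw [hyout v hv]; ring
    rw [← Finset.sum_add_sum_compl X (fun u => ∑ v, y u * A u v * y v)]
    have h1 : ∑ u ∈ X, ∑ v, y u * A u v * y v
        = α * α * (∑ u ∈ X, ∑ v ∈ X, A u v) + α * β * B := by
      rw [hB, Finset.mul_sum, Finset.mul_sum, ← Finset.sum_add_distrib]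
      refine Finset.sum_congr rfl fun u hu => ?_
      have h3 := hinner (y u) u
      rw [hyin u hu] at h3 ⊢
      rw [h3]
    have h2 : ∑ u ∈ Xᶜ, ∑ v, y u * A u v * y v
        = β * α * (∑ u ∈ Xᶜ, ∑ v ∈ X, A u v) + β * β * (∑ u ∈ Xᶜ, ∑ v ∈ Xᶜ, A u v) := by
      rw [Finset.mul_sum, Finset.mul_sum, ← Finset.sum_add_distrib]
      refine Finset.sum_congr rfl fun u hu => ?_
      have h3 := hinner (y u) u
      rw [hyout u hu] at h3 ⊢
      rw [h3]
    rw [h1, h2, hSsym, hSXX, hSCC]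
    ring
  rw [hdot, hDpart, hApart]
  ring

theorem stmt7 (n k m : ℕ) (hk : 2 ≤ k) (E : Finset (Finset (Fin n)))
    (hunif : ∀ e ∈ E, e.card = k) (hm : E.card = m) (hiso : ∀ v : Fin n, 0 < hdeg E v)
    (X : Finset (Fin n)) (hX : X.Nonempty) (hXp : X ≠ Finset.univ) :
    bndR E X * (k : ℝ) * (m : ℝ) /
        (((k : ℝ) - 1) * volR E X * ((k : ℝ) * (m : ℝ) - volR E X)) ≤
      lamMax (normLap E) := by
  classical
  set d : Fin n → ℝ := fun v => (hdeg E v : ℝ) with hd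
  have hdpos : ∀ v, 0 < d v := fun v =>
    show (0 : ℝ) < ((hdeg E v : ℕ) : ℝ) by exact_mod_cast hiso v
  have hk1 : (0 : ℝ) < (k : ℝ) - 1 := by
    have : (2 : ℝ) ≤ (k : ℝ) := by exact_mod_cast hk
    linarith
  set volX := volR E X with hvolX
  set volXc := volR E Xᶜ with hvolXc
  have hvolXpos : 0 < volX := Finset.sum_pos (fun v _ => hdpos v) hX
  have hXcne : Xᶜ.Nonempty := Finset.nonempty_iff_ne_empty.mpr
    (fun h => hXp (by rwa [Finset.compl_eq_empty_iff] at h))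
  have hvolXcpos : 0 < volXc :=
    Finset.sum_pos (fun v _ => hdpos v) hXcne
  have hkm : (k : ℝ) * (m : ℝ) = volX + volXc := by
    rw [← handshake E hunif hm, ← Finset.sum_add_sum_compl X (fun v => (hdeg E v : ℝ))]
    rfl
  set T := volX + volXc with hT
  have hTpos : 0 < T := by positivity
  set y : Fin n → ℝ := fun v => if v ∈ X then volXc else -volX with hy
  set x : Fin n → ℝ := fun v => (d v) ^ ((1/2 : ℝ)) * y v with hx
  have hrow := adj_rowsum hk E hunif
  have hcancel : ∀ v, (d v) ^ (-(1/2) : ℝ) * (d v) ^ ((1/2) : ℝ) = 1 := by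
    intro v
    rw [← Real.rpow_add (hdpos v)]
    norm_num
  have hDx : (Matrix.diagonal (fun v => (hdeg E v : ℝ) ^ (-(1/2) : ℝ))).mulVec x = y := by
    funext v
    rw [Matrix.mulVec_diagonal]
    show (d v) ^ (-(1/2) : ℝ) * ((d v) ^ ((1/2 : ℝ)) * y v) = y v
    rw [← mul_assoc, hcancel v, one_mul]
  have hquadnorm : dotProduct x ((normLap E).mulVec x)
      = dotProduct y ((lapMat E).mulVec y) := by
    rw [normLap, ← Matrix.mulVec_mulVec, ← Matrix.mulVec_mulVec, hDx]
    simp only [dotProduct, Matrix.mulVec_diagonal]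
    refine Finset.sum_congr rfl fun v _ => ?_
    show (d v) ^ ((1/2 : ℝ)) * y v * ((d v) ^ (-(1/2) : ℝ) * _) = y v * _
    rw [← mul_assoc]
    congr 1
    rw [mul_comm ((d v) ^ ((1/2 : ℝ))) (y v), mul_assoc, mul_comm ((d v) ^ ((1/2 : ℝ))),
      hcancel v, mul_one]
  have hcrossS : ∑ u ∈ X, ∑ v ∈ Xᶜ, adjMat E u v = bndR E X / ((k : ℝ) - 1) := by
    rw [bndR, Finset.sum_div]
    refine Finset.sum_congr rfl fun u hu => ?_
    rw [Finset.sum_div]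
    refine Finset.sum_congr rfl fun v hv => ?_
    have huv : u ≠ v := fun h => (Finset.mem_compl.mp hv) (h ▸ hu)
    exact adj_cross E hunif huv
  have hquad : dotProduct y ((lapMat E).mulVec y)
      = bndR E X / ((k : ℝ) - 1) * T ^ 2 := by
    rw [hy, dot_lap E hrow X volXc (-volX), hcrossS]
    have h6 : volXc - -volX = T := by rw [hT]; ring
    rw [h6]
  have hxx : dotProduct x x = volX * volXc * T := by
    have h1 : dotProduct x x = ∑ v, d v * y v ^ 2 := by
      simp only [dotProduct]
      refine Finset.sum_congr rfl fun v _ => ?_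
      show (d v) ^ ((1/2 : ℝ)) * y v * ((d v) ^ ((1/2 : ℝ)) * y v) = d v * y v ^ 2
      have h2 : (d v) ^ ((1/2 : ℝ)) * (d v) ^ ((1/2 : ℝ)) = d v := by
        rw [← Real.rpow_add (hdpos v)]
        norm_num
      calc (d v) ^ ((1/2 : ℝ)) * y v * ((d v) ^ ((1/2 : ℝ)) * y v)
          = ((d v) ^ ((1/2 : ℝ)) * (d v) ^ ((1/2 : ℝ))) * (y v * y v) := by ring
        _ = d v * y v ^ 2 := by rw [h2]; ring
    rw [h1, ← Finset.sum_add_sum_compl X (fun v => d v * y v ^ 2)]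
    have h3 : ∑ v ∈ X, d v * y v ^ 2 = volXc ^ 2 * volX := by
      rw [hvolX, volR, Finset.mul_sum]
      exact Finset.sum_congr rfl fun v hv => by
        show d v * y v ^ 2 = _
        rw [hy]; simp only [if_pos hv]; ring
    have h4 : ∑ v ∈ Xᶜ, d v * y v ^ 2 = (-volX) ^ 2 * volXc := by
      rw [hvolXc, volR, Finset.mul_sum]
      exact Finset.sum_congr rfl fun v hv => by
        show d v * y v ^ 2 = _
        rw [hy]; simp only [if_neg (Finset.mem_compl.mp hv)]; ring
    rw [h3, h4, hT]
    ring
  have hherm := isHermitian_normLap E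
  have hray : dotProduct x ((normLap E).mulVec x)
      ≤ lamMax (normLap E) * dotProduct x x := by
    rw [lamMax_eq _ hherm]
    exact rayleigh_aux _ hherm x
  rw [hquadnorm, hquad, hxx] at hray
  have hgoal_eq : bndR E X * (k : ℝ) * (m : ℝ) /
      (((k : ℝ) - 1) * volX * ((k : ℝ) * (m : ℝ) - volX))
      = (bndR E X / ((k : ℝ) - 1) * T ^ 2) / (volX * volXc * T) := by
    rw [mul_assoc, hkm]
    have h5 : volX + volXc - volX = volXc := by ring
    rw [h5]
    rw [hT]
    field_simp
  rw [hgoal_eq]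
  rw [div_le_iff₀ (by positivity)]
  exact hray
end

section
/- Let H be a k-uniform hypergraph on n vertices without isolated vertices and with fewer than n edges. Then λ_1(H) = k/(k-1). -/
open Finset Matrix

variable {n : ℕ}

section AuxLemmas

variable {k : ℕ} {E : Finset (Finset (Fin n))}



lemma hdeg_eq_sum (v : Fin n) :
    (hdeg E v : ℝ) = ∑ e ∈ E, (if v ∈ e then (1:ℝ) else 0) := by
  rw [hdeg, Finset.card_filter]
  push_cast
  rfl

lemma quad_diag (y : Fin n → ℝ) :
    y ⬝ᵥ (Matrix.diagonal (fun v => (hdeg E v : ℝ)) *ᵥ y) = ∑ e ∈ E, ∑ u ∈ e, y u ^ 2 := by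
  have : ∀ v, y v * ((Matrix.diagonal (fun v => (hdeg E v : ℝ)) *ᵥ y) v)
      = ∑ e ∈ E, (if v ∈ e then y v ^ 2 else 0) := by
    intro v
    rw [Matrix.mulVec_diagonal, hdeg_eq_sum, Finset.sum_mul, Finset.mul_sum]
    refine Finset.sum_congr rfl fun e _ => ?_
    by_cases h : v ∈ e <;> simp [h] <;> ring
  rw [dotProduct]
  simp_rw [this]
  rw [Finset.sum_comm]
  refine Finset.sum_congr rfl fun e _ => ?_
  rw [Finset.sum_ite_mem, Finset.univ_inter]

lemma adjMat_entry (hk : 2 ≤ k) (hunif : ∀ e ∈ E, e.card = k) (u v : Fin n) :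
    adjMat E u v = ∑ e ∈ E, (if u ∈ e ∧ v ∈ e ∧ u ≠ v then ((k:ℝ)-1)⁻¹ else 0) := by
  rw [adjMat]
  by_cases h : u = v
  · subst h; simp
  · rw [if_neg h, Finset.sum_filter]
    refine Finset.sum_congr rfl fun e he => ?_
    rw [hunif e he]
    by_cases h2 : u ∈ e ∧ v ∈ e
    · simp [h2, h, one_div]
    · simp only [h2, if_false]
      rw [if_neg]
      tauto

lemma double_sum_edge (e : Finset (Fin n)) (y : Fin n → ℝ) :
    ∑ u : Fin n, ∑ v : Fin n, (if u ∈ e ∧ v ∈ e ∧ u ≠ v then y u * y v else 0)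
      = (∑ u ∈ e, y u) ^ 2 - ∑ u ∈ e, y u ^ 2 := by
  have h1 : ∀ u v : Fin n, (if u ∈ e ∧ v ∈ e ∧ u ≠ v then y u * y v else 0)
      = (if u ∈ e then y u else 0) * (if v ∈ e then y v else 0)
        - (if v = u then (if u ∈ e then y u * y v else 0) else 0) := by
    intro u v
    by_cases h : v = u
    · subst h
      by_cases hv : v ∈ e <;> simp [hv]
    · by_cases hu : u ∈ e <;> by_cases hv : v ∈ e <;>
        simp [hu, hv, h]
      all_goals exact fun hh => absurd hh.symm h
  simp_rw [h1, Finset.sum_sub_distrib]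
  congr 1
  · rw [← Finset.sum_mul_sum]
    rw [Finset.sum_ite_mem, Finset.univ_inter, sq]
  · have h2 : ∀ u : Fin n,
        (∑ v : Fin n, if v = u then (if u ∈ e then y u * y v else 0) else 0)
          = (if u ∈ e then y u ^ 2 else 0) := by
      intro u
      rw [Finset.sum_ite_eq' Finset.univ u]
      simp [sq]
    simp_rw [h2]
    rw [Finset.sum_ite_mem, Finset.univ_inter]

lemma quad_adj (hk : 2 ≤ k) (hunif : ∀ e ∈ E, e.card = k) (y : Fin n → ℝ) :
    y ⬝ᵥ (adjMat E *ᵥ y)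
      = ∑ e ∈ E, ((∑ u ∈ e, y u) ^ 2 - ∑ u ∈ e, y u ^ 2) * ((k:ℝ)-1)⁻¹ := by
  have step : y ⬝ᵥ (adjMat E *ᵥ y)
      = ∑ u : Fin n, ∑ v : Fin n, ∑ e ∈ E,
          (if u ∈ e ∧ v ∈ e ∧ u ≠ v then y u * y v * ((k:ℝ)-1)⁻¹ else 0) := by
    rw [dotProduct]
    refine Finset.sum_congr rfl fun u _ => ?_
    rw [Matrix.mulVec, dotProduct, Finset.mul_sum]
    refine Finset.sum_congr rfl fun v _ => ?_
    rw [adjMat_entry hk hunif, Finset.sum_mul, Finset.mul_sum]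
    refine Finset.sum_congr rfl fun e _ => ?_
    by_cases h : u ∈ e ∧ v ∈ e ∧ u ≠ v <;> simp [h] <;> ring
  rw [step]
  have sw1 : ∀ u : Fin n, (∑ v : Fin n, ∑ e ∈ E,
      (if u ∈ e ∧ v ∈ e ∧ u ≠ v then y u * y v * ((k:ℝ)-1)⁻¹ else 0))
      = ∑ e ∈ E, ∑ v : Fin n,
      (if u ∈ e ∧ v ∈ e ∧ u ≠ v then y u * y v * ((k:ℝ)-1)⁻¹ else 0) :=
    fun u => Finset.sum_comm
  simp_rw [sw1]
  rw [Finset.sum_comm]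
  refine Finset.sum_congr rfl fun e _ => ?_
  have h3 : ∀ u v : Fin n, (if u ∈ e ∧ v ∈ e ∧ u ≠ v then y u * y v * ((k:ℝ)-1)⁻¹ else 0)
      = (if u ∈ e ∧ v ∈ e ∧ u ≠ v then y u * y v else 0) * ((k:ℝ)-1)⁻¹ := by
    intro u v; by_cases h : u ∈ e ∧ v ∈ e ∧ u ≠ v <;> simp [h]
  simp_rw [h3, ← Finset.sum_mul]
  rw [double_sum_edge]

lemma quad_lap (hk : 2 ≤ k) (hunif : ∀ e ∈ E, e.card = k) (y : Fin n → ℝ) :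
    y ⬝ᵥ (lapMat E *ᵥ y)
      = ∑ e ∈ E, ((k:ℝ) * ∑ u ∈ e, y u ^ 2 - (∑ u ∈ e, y u) ^ 2) * ((k:ℝ)-1)⁻¹ := by
  have hk1 : ((k:ℝ) - 1) ≠ 0 := by
    have : (2:ℝ) ≤ (k:ℝ) := by exact_mod_cast hk
    nlinarith
  rw [lapMat, Matrix.sub_mulVec, dotProduct_sub, quad_diag, quad_adj hk hunif,
    ← Finset.sum_sub_distrib]
  refine Finset.sum_congr rfl fun e _ => ?_
  field_simp
  ring

lemma quad_lap_le (hk : 2 ≤ k) (hunif : ∀ e ∈ E, e.card = k) (y : Fin n → ℝ) :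
    y ⬝ᵥ (lapMat E *ᵥ y) ≤ ((k:ℝ)/((k:ℝ)-1)) *
      (y ⬝ᵥ (Matrix.diagonal (fun v => (hdeg E v : ℝ)) *ᵥ y)) := by
  have hk1 : (0:ℝ) < (k:ℝ) - 1 := by
    have : (2:ℝ) ≤ (k:ℝ) := by exact_mod_cast hk
    linarith
  rw [quad_lap hk hunif, quad_diag, Finset.mul_sum]
  refine Finset.sum_le_sum fun e _ => ?_
  rw [div_eq_mul_inv, mul_assoc, ← mul_assoc]
  have h1 : ((k:ℝ) * ∑ u ∈ e, y u ^ 2 - (∑ u ∈ e, y u) ^ 2) ≤ (k:ℝ) * ∑ u ∈ e, y u ^ 2 := by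
    nlinarith [sq_nonneg (∑ u ∈ e, y u)]
  calc ((k:ℝ) * ∑ u ∈ e, y u ^ 2 - (∑ u ∈ e, y u) ^ 2) * ((k:ℝ)-1)⁻¹
      ≤ ((k:ℝ) * ∑ u ∈ e, y u ^ 2) * ((k:ℝ)-1)⁻¹ := by
        apply mul_le_mul_of_nonneg_right h1 (by positivity)
    _ = (k:ℝ) * ((k:ℝ)-1)⁻¹ * ∑ u ∈ e, y u ^ 2 := by ring

lemma quad_norm (x : Fin n → ℝ) :
    x ⬝ᵥ (normLap E *ᵥ x)
      = (fun v => (hdeg E v : ℝ) ^ (-(1/2) : ℝ) * x v) ⬝ᵥ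
        (lapMat E *ᵥ (fun v => (hdeg E v : ℝ) ^ (-(1/2) : ℝ) * x v)) := by
  set dh : Fin n → ℝ := fun v => (hdeg E v : ℝ) ^ (-(1/2) : ℝ) with hdh
  have h1 : normLap E *ᵥ x
      = Matrix.diagonal dh *ᵥ (lapMat E *ᵥ (Matrix.diagonal dh *ᵥ x)) := by
    rw [Matrix.mulVec_mulVec, Matrix.mulVec_mulVec, normLap]
  rw [h1]
  have h2 : Matrix.diagonal dh *ᵥ x = fun v => dh v * x v := by
    funext v; rw [Matrix.mulVec_diagonal]
  rw [h2, dotProduct, dotProduct]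
  refine Finset.sum_congr rfl fun v _ => ?_
  rw [Matrix.mulVec_diagonal]
  ring

lemma dot_diag_eq (hiso : ∀ v : Fin n, 0 < hdeg E v) (x : Fin n → ℝ) :
    (fun v => (hdeg E v : ℝ) ^ (-(1/2) : ℝ) * x v) ⬝ᵥ
      (Matrix.diagonal (fun v => (hdeg E v : ℝ)) *ᵥ
        (fun v => (hdeg E v : ℝ) ^ (-(1/2) : ℝ) * x v)) = x ⬝ᵥ x := by
  rw [dotProduct, dotProduct]
  refine Finset.sum_congr rfl fun v _ => ?_
  rw [Matrix.mulVec_diagonal]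
  have hd : (0:ℝ) < (hdeg E v : ℝ) := by exact_mod_cast hiso v
  have key : (hdeg E v : ℝ) ^ (-(1/2) : ℝ) * (hdeg E v : ℝ) ^ (-(1/2) : ℝ)
      * (hdeg E v : ℝ) = 1 := by
    rw [← Real.rpow_add hd]
    norm_num
    rw [Real.rpow_neg_one]
    exact inv_mul_cancel₀ (ne_of_gt hd)
  calc (hdeg E v:ℝ) ^ (-(1/2) : ℝ) * x v * ((hdeg E v:ℝ) * ((hdeg E v:ℝ) ^ (-(1/2) : ℝ) * x v))
      = ((hdeg E v:ℝ) ^ (-(1/2) : ℝ) * (hdeg E v:ℝ) ^ (-(1/2) : ℝ) * (hdeg E v:ℝ)) * (x v * x v) := by ring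
    _ = x v * x v := by rw [key, one_mul]

lemma quadN_le (hk : 2 ≤ k) (hunif : ∀ e ∈ E, e.card = k)
    (hiso : ∀ v : Fin n, 0 < hdeg E v) (x : Fin n → ℝ) :
    x ⬝ᵥ (normLap E *ᵥ x) ≤ ((k:ℝ)/((k:ℝ)-1)) * (x ⬝ᵥ x) := by
  rw [quad_norm, ← dot_diag_eq hiso x]
  exact quad_lap_le hk hunif _

lemma adj_herm : (adjMat E).IsHermitian := by
  rw [Matrix.IsHermitian]
  ext u v
  simp only [Matrix.conjTranspose_apply, adjMat, star_trivial]
  by_cases h : v = u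
  · subst h; rfl
  · rw [if_neg h, if_neg (Ne.symm h)]
    apply Finset.sum_congr _ fun _ _ => rfl
    apply Finset.filter_congr
    intro e _
    simp [and_comm]

lemma normLap_herm : (normLap E).IsHermitian := by
  have hd : (Matrix.diagonal (fun v => (hdeg E v : ℝ) ^ (-(1/2) : ℝ))).IsHermitian :=
    Matrix.isHermitian_diagonal _
  have hl : (lapMat E).IsHermitian :=
    (Matrix.isHermitian_diagonal _).sub adj_herm
  rw [normLap, Matrix.IsHermitian, Matrix.conjTranspose_mul, Matrix.conjTranspose_mul,
    hd.eq, hl.eq, Matrix.mul_assoc]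

lemma exists_kernel_vec (hE : E.card < n) :
    ∃ y : Fin n → ℝ, y ≠ 0 ∧ ∀ e ∈ E, ∑ u ∈ e, y u = 0 := by
  classical
  let φ : (Fin n → ℝ) →ₗ[ℝ] (↥E → ℝ) :=
    { toFun := fun y e => ∑ u ∈ e.1, y u
      map_add' := by intro a b; funext e; simp [Finset.sum_add_distrib]
      map_smul' := by intro c a; funext e; simp [Finset.mul_sum] }
  by_contra hcon
  push_neg at hcon
  have hinj : Function.Injective φ := by
    rw [← LinearMap.ker_eq_bot, Submodule.eq_bot_iff]
    intro y hy
    by_contra hy0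
    obtain ⟨e, he, hne⟩ := hcon y hy0
    exact hne (congrFun hy ⟨e, he⟩)
  have := LinearMap.finrank_le_finrank_of_injective hinj
  simp [Module.finrank_pi, Fintype.card_coe] at this
  omega

lemma exists_eig_vec (hk : 2 ≤ k) (hunif : ∀ e ∈ E, e.card = k)
    (hiso : ∀ v : Fin n, 0 < hdeg E v) (hE : E.card < n) :
    ∃ x : Fin n → ℝ, x ≠ 0 ∧
      normLap E *ᵥ x = ((k:ℝ)/((k:ℝ)-1)) • x := by
  obtain ⟨y, hy0, hy⟩ := exists_kernel_vec hE
  set c : ℝ := (k:ℝ)/((k:ℝ)-1) with hc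
  set x : Fin n → ℝ := fun v => (hdeg E v : ℝ) ^ ((1/2) : ℝ) * y v with hx
  have hd : ∀ v, (0:ℝ) < (hdeg E v : ℝ) := fun v => by exact_mod_cast hiso v
  have hxy : (fun v => (hdeg E v : ℝ) ^ (-(1/2) : ℝ) * x v) = y := by
    funext v
    rw [hx]
    rw [← mul_assoc, ← Real.rpow_add (hd v)]
    norm_num
  have hx0 : x ≠ 0 := by
    intro h
    apply hy0
    funext v
    have := congrFun h v
    rw [hx] at this
    simp only [Pi.zero_apply] at this ⊢
    rcases mul_eq_zero.mp this with h' | h'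
    · exact absurd h' (ne_of_gt (Real.rpow_pos_of_pos (hd v) _))
    · exact h'
  -- quadratic form equality
  have hquad : x ⬝ᵥ (normLap E *ᵥ x) = c * (x ⬝ᵥ x) := by
    rw [quad_norm, hxy, quad_lap hk hunif, ← dot_diag_eq hiso x, hxy, quad_diag,
      Finset.mul_sum]
    refine Finset.sum_congr rfl fun e he => ?_
    rw [hy e he]
    have h2k : (2:ℝ) ≤ (k:ℝ) := by exact_mod_cast hk
    have hk1 : ((k:ℝ) - 1) ≠ 0 := by nlinarith
    have hk2 : (-1 + (k:ℝ)) ≠ 0 := by intro h; apply hk1; linarith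
    rw [hc]
    field_simp
    ring
  -- PSD argument
  set M : Matrix (Fin n) (Fin n) ℝ := c • (1 : Matrix (Fin n) (Fin n) ℝ) - normLap E with hM
  have hMherm : M.IsHermitian := by
    refine Matrix.IsHermitian.sub ?_ normLap_herm
    simp [Matrix.IsHermitian, Matrix.conjTranspose_smul]
  have hMv : ∀ z : Fin n → ℝ, M *ᵥ z = c • z - normLap E *ᵥ z := by
    intro z
    rw [hM, Matrix.sub_mulVec, Matrix.smul_mulVec, Matrix.one_mulVec]
  have hMpsd : M.PosSemidef := by
    refine .of_dotProduct_mulVec_nonneg hMherm fun z => ?_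
    rw [star_trivial, hMv, dotProduct_sub, dotProduct_smul]
    have := quadN_le hk hunif hiso z
    simp only [smul_eq_mul]
    linarith
  have hzero : star x ⬝ᵥ (M *ᵥ x) = 0 := by
    rw [star_trivial, hMv, dotProduct_sub, dotProduct_smul, hquad,
      smul_eq_mul, sub_self]
  have := (hMpsd.dotProduct_mulVec_zero_iff x).mp hzero
  rw [hMv, sub_eq_zero] at this
  exact ⟨x, hx0, this.symm⟩

end AuxLemmas

theorem stmt12 (n k : ℕ) (hk : 2 ≤ k) (E : Finset (Finset (Fin n)))
    (hunif : ∀ e ∈ E, e.card = k) (hiso : ∀ v : Fin n, 0 < hdeg E v)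
    (hE : E.card < n) :
    lamMax (normLap E) = (k : ℝ) / ((k : ℝ) - 1) := by
  have hN : (normLap E).IsHermitian := normLap_herm
  set c : ℝ := (k:ℝ)/((k:ℝ)-1) with hc
  have hn : 0 < n := lt_of_le_of_lt (Nat.zero_le _) hE
  haveI : Nonempty (Fin n) := ⟨⟨0, hn⟩⟩
  have hub : ∀ i, hN.eigenvalues i ≤ c := by
    intro i
    set v : Fin n → ℝ := ⇑(hN.eigenvectorBasis i) with hvdef
    have hv : normLap E *ᵥ v = hN.eigenvalues i • v := hN.mulVec_eigenvectorBasis i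
    have hv0 : v ≠ 0 := by
      intro h
      apply hN.eigenvectorBasis.orthonormal.ne_zero i
      ext j
      exact congrFun h j
    have hpos : 0 < v ⬝ᵥ v := by
      rcases lt_or_eq_of_le (Finset.sum_nonneg fun j _ => mul_self_nonneg (v j)) with h | h
      · exact h
      · exact absurd (dotProduct_self_eq_zero.mp h.symm) hv0
    have heq : v ⬝ᵥ (normLap E *ᵥ v) = hN.eigenvalues i * (v ⬝ᵥ v) := by
      rw [hv, dotProduct_smul, smul_eq_mul]
    have hle := quadN_le hk hunif hiso v
    rw [heq] at hle
    exact le_of_mul_le_mul_right hle hpos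
  obtain ⟨x, hx0, hx⟩ := exists_eig_vec hk hunif hiso hE
  have hdet : (c • (1 : Matrix (Fin n) (Fin n) ℝ) - normLap E).det = 0 := by
    rw [← Matrix.exists_mulVec_eq_zero_iff]
    refine ⟨x, hx0, ?_⟩
    rw [Matrix.sub_mulVec, Matrix.smul_mulVec, Matrix.one_mulVec, hx, sub_self]
  have hspec : c ∈ spectrum ℝ (normLap E) := by
    rw [spectrum.mem_iff]
    intro hunit
    rw [Algebra.algebraMap_eq_smul_one] at hunit
    have := (Matrix.isUnit_iff_isUnit_det _).mp hunit
    rw [hdet] at this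
    exact not_isUnit_zero this
  rw [hN.spectrum_real_eq_range_eigenvalues] at hspec
  obtain ⟨i0, hi0⟩ := hspec
  have he : eigsAsc (normLap E) = hN.eigenvalues ∘ Tuple.sort hN.eigenvalues := by
    rw [eigsAsc, dif_pos hN]
  rw [lamMax, he]
  have hs : ⨆ i, (hN.eigenvalues ∘ Tuple.sort hN.eigenvalues) i = ⨆ i, hN.eigenvalues i := by
    rw [iSup, iSup, (Tuple.sort hN.eigenvalues).surjective.range_comp hN.eigenvalues]
  rw [hs]
  apply le_antisymm
  · exact ciSup_le hub
  · exact hi0 ▸ le_ciSup (Set.Finite.bddAbove (Set.finite_range _)) i0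
end
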